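/- arXiv:2305.05601 — 3 statements merged into one kernel-verified Lean document; each statement's English description precedes it below -/
import Mathlib

section
/- Let p : ℝ^P → ℝ^C be differentiable with p_i(w) > 0 for all i and Σ_{i=1}^C p_i(w) = 1 for all w, and let F(w) be the Fisher information matrix. Then for every w ∈ ℝ^P the rank of F(w) is strictly less than C: rank F(w) ≤ C - 1. -/
open Matrix

/-- Let `p : ℝ^P → ℝ^C` be differentiable with `p i (w) > 0` and
`∑ i, p i (w) = 1`, and let `F(w)` be the Fisher information matrix. Then for every `w`
the rank of `F(w)` is strictly less than `C`. -/
theorem fisher_matrix_rank_lt_classes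
    (C P : ℕ) (hC : 1 ≤ C) (hP : 1 ≤ P)
    (p : EuclideanSpace ℝ (Fin P) → Fin C → ℝ)
    (hdiff : ∀ i, Differentiable ℝ fun w => p w i)
    (hpos : ∀ w i, 0 < p w i)
    (hsum : ∀ w, ∑ i, p w i = 1)
    (w : EuclideanSpace ℝ (Fin P))
    (F : Matrix (Fin P) (Fin P) ℝ)
    (hF : ∀ a b : Fin P,
      F a b = ∑ i, p w i *
        (gradient (fun w' => Real.log (p w' i)) w a *
         gradient (fun w' => Real.log (p w' i)) w b)) :
    F.rank < C := by
  -- gradients of the log-likelihoods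
  set g : Fin C → EuclideanSpace ℝ (Fin P) :=
    fun i => gradient (fun w' => Real.log (p w' i)) w with hg
  -- chain rule: p w i • ∇(log p_i) = ∇ p_i
  have hchain : ∀ i, p w i • g i = gradient (fun w' => p w' i) w := by
    intro i
    have hne : p w i ≠ 0 := (hpos w i).ne'
    have h1 : HasFDerivAt (fun w' => Real.log (p w' i))
        ((p w i)⁻¹ • fderiv ℝ (fun w' => p w' i) w) w :=
      (Real.hasDerivAt_log hne).comp_hasFDerivAt (f := fun w' => p w' i) w ((hdiff i) w).hasFDerivAt
    show p w i • gradient (fun w' => Real.log (p w' i)) w = gradient (fun w' => p w' i) w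
    rw [h1.hasGradientAt.gradient, gradient]
    simp [smul_smul, hne]
  -- sum of fderivs of p_i is zero, since ∑ p_i ≡ 1
  have hsumfd : (∑ i, fderiv ℝ (fun w' => p w' i) w) = 0 := by
    have h2 : HasFDerivAt (fun w' => ∑ i, p w' i)
        (∑ i, fderiv ℝ (fun w' => p w' i) w) w :=
      HasFDerivAt.fun_sum fun i _ => ((hdiff i) w).hasFDerivAt
    have h3 : HasFDerivAt (fun w' : EuclideanSpace ℝ (Fin P) => ∑ i, p w' i)
        (0 : EuclideanSpace ℝ (Fin P) →L[ℝ] ℝ) w := by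
      have : (fun w' : EuclideanSpace ℝ (Fin P) => ∑ i, p w' i) = fun _ => (1:ℝ) := by
        funext w'; exact hsum w'
      rw [this]; exact hasFDerivAt_const 1 w
    exact h2.unique h3
  -- hence ∑ p_i • ∇(log p_i) = 0
  have hkey : (∑ i, p w i • g i) = 0 := by
    rw [Finset.sum_congr rfl fun i _ => hchain i]
    have : ∀ i : Fin C, gradient (fun w' => p w' i) w =
        (InnerProductSpace.toDual ℝ (EuclideanSpace ℝ (Fin P))).symm
          (fderiv ℝ (fun w' => p w' i) w) := fun i => rfl
    simp_rw [this]
    rw [← map_sum, hsumfd, map_zero]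
  have hkey' : ∀ a : Fin P, (∑ i, p w i * g i a) = 0 := by
    intro a
    have := congrArg (EuclideanSpace.proj a (𝕜 := ℝ)) hkey
    rw [map_sum, map_zero] at this
    simpa [smul_eq_mul] using this
  -- write F as a product of matrices with at most C - 1 independent rows
  set A : Matrix (Fin C) (Fin P) ℝ := Matrix.of fun i a => p w i * g i a with hA
  set B : Matrix (Fin C) (Fin P) ℝ := Matrix.of fun i b => g i b with hB
  have hFact : F = Aᵀ * B := by
    ext a b
    rw [hF, Matrix.mul_apply]
    simp [hA, hB, mul_assoc, hg]
  have h1 : F.rank ≤ Aᵀ.rank := hFact ▸ Matrix.rank_mul_le_left Aᵀ B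
  have h2 : Aᵀ.rank < C := by
    have hker : (fun _ : Fin C => (1:ℝ)) ∈ LinearMap.ker Aᵀ.mulVecLin := by
      rw [LinearMap.mem_ker]
      funext a
      simp [Matrix.mulVecLin_apply, Matrix.mulVec_transpose, Matrix.vecMul,
        dotProduct, hA]
      exact hkey' a
    have hne : (fun _ : Fin C => (1:ℝ)) ≠ 0 := by
      intro h
      have := congrFun h ⟨0, hC⟩
      simp at this
    have hkerpos : 0 < Module.finrank ℝ (LinearMap.ker Aᵀ.mulVecLin) := by
      rw [Module.finrank_pos_iff_exists_ne_zero]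
      exact ⟨⟨_, hker⟩, fun h => hne (congrArg Subtype.val h)⟩
    have hrn := LinearMap.finrank_range_add_finrank_ker Aᵀ.mulVecLin
    have : Module.finrank ℝ (Fin C → ℝ) = C := by simp
    rw [this] at hrn
    have : Aᵀ.rank = Module.finrank ℝ (LinearMap.range Aᵀ.mulVecLin) := rfl
    omega
  omega
end

section
/- Let σ : ℝ → ℝ be a bounded, non-constant, continuous function. Then the set of σ-multilayer perceptrons from ℝ^n to ℝ is dense in C(ℝ^n, ℝ) for the topology of uniform convergence on compact sets: for every continuous function f : ℝ^n → ℝ, every compact set K ⊂ ℝ^n, and every ε > 0, there exists a σ-multilayer perceptron F : ℝ^n → ℝ such that sup_{x ∈ K} |f(x) - F(x)| < ε. -/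
open Matrix

/-- `IsMLPCore σ F` says that `F : ℝ^n → ℝ^m` is a `σ`-multilayer perceptron, i.e. of the
form `F = G ∘ (σ ∘ A_{L-1}) ∘ ⋯ ∘ (σ ∘ A_1)` with `L ≥ 1`, where all `A_i` and `G` are
affine maps (`x ↦ M x + b`) and `σ` is applied componentwise. The base case is `L = 1`
(a single affine map `G`); the inductive step prepends a hidden layer `σ ∘ A`. -/
inductive IsMLPCore (σ : ℝ → ℝ) : ∀ {n m : ℕ}, ((Fin n → ℝ) → (Fin m → ℝ)) → Prop
  | affine {n m : ℕ} (M : Matrix (Fin m) (Fin n) ℝ) (b : Fin m → ℝ) :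
      IsMLPCore σ (fun x => M.mulVec x + b)
  | comp {n k m : ℕ} (M : Matrix (Fin k) (Fin n) ℝ) (b : Fin k → ℝ)
      {F : (Fin k → ℝ) → (Fin m → ℝ)} (hF : IsMLPCore σ F) :
      IsMLPCore σ (fun x => F (fun i => σ (M.mulVec x i + b i)))

/-- `F : ℝ^n → ℝ` is a `σ`-multilayer perceptron with scalar output if it is obtained
from a `σ`-MLP with values in `ℝ^1` by reading off the single coordinate. -/
def IsMLP (σ : ℝ → ℝ) {n : ℕ} (F : (Fin n → ℝ) → ℝ) : Prop :=
  ∃ Fc : (Fin n → ℝ) → (Fin 1 → ℝ), IsMLPCore σ Fc ∧ ∀ x, F x = Fc x 0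

namespace MLPaux

open MeasureTheory Filter Topology Set Function ContinuousLinearMap
open scoped Convolution

noncomputable section

variable {n : ℕ}

/-! ### Polynomial helpers -/

/-- Every polynomial has a polynomial antiderivative, of degree at most `deg + 1`. -/
lemma exists_antideriv (p : Polynomial ℝ) :
    ∃ q : Polynomial ℝ, q.derivative = p ∧ q.degree ≤ p.degree + 1 := by
  refine ⟨p.sum fun n a => Polynomial.C (a / (n + 1)) * Polynomial.X ^ (n + 1), ?_, ?_⟩
  · rw [Polynomial.sum, map_sum]
    have : ∀ n ∈ p.support,
        Polynomial.derivative (Polynomial.C (p.coeff n / (n + 1)) * Polynomial.X ^ (n + 1))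
          = Polynomial.C (p.coeff n) * Polynomial.X ^ n := by
      intro n _
      have hcast : (p.coeff n / ((n : ℝ) + 1) * ((n + 1 : ℕ) : ℝ)) = p.coeff n := by
        push_cast
        field_simp
      rw [Polynomial.derivative_C_mul_X_pow, hcast, Nat.add_sub_cancel]
    rw [Finset.sum_congr rfl this]
    conv_rhs => rw [← Polynomial.sum_C_mul_X_pow_eq p]
    rw [Polynomial.sum]
  · refine (Polynomial.degree_sum_le _ _).trans ?_
    refine Finset.sup_le fun n hn => ?_
    refine (Polynomial.degree_C_mul_X_pow_le _ _).trans ?_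
    have h1 : (n : WithBot ℕ) ≤ p.degree := Polynomial.le_degree_of_ne_zero
      (Polynomial.mem_support_iff.mp hn)
    have : ((n + 1 : ℕ) : WithBot ℕ) = (n : WithBot ℕ) + 1 := by push_cast; ring
    rw [this]
    exact add_le_add_left h1 1

/-- A smooth function whose `k`-th derivative vanishes identically is (given by) a
polynomial of degree `< k`. -/
lemma poly_of_iteratedDeriv_zero :
    ∀ (k : ℕ) (χ : ℝ → ℝ), ContDiff ℝ ((⊤ : ℕ∞) : WithTop ℕ∞) χ →
      (∀ x, iteratedDeriv k χ x = 0) →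
      ∃ p : Polynomial ℝ, p.degree < (k : ℕ) ∧ ∀ x, χ x = p.eval x
  | 0, χ, _, h0 => by
    refine ⟨0, ?_, fun x => ?_⟩
    · simpa [Polynomial.degree_zero] using WithBot.bot_lt_coe 0
    · simpa [iteratedDeriv_zero] using h0 x
  | (k + 1), χ, hχ, h0 => by
    have hd : ContDiff ℝ ((⊤ : ℕ∞) : WithTop ℕ∞) (deriv χ) :=
      (contDiff_infty_iff_deriv.mp hχ).2
    have h0' : ∀ x, iteratedDeriv k (deriv χ) x = 0 := by
      intro x
      rw [← iteratedDeriv_succ']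
      exact h0 x
    obtain ⟨p, hpd, hp⟩ := poly_of_iteratedDeriv_zero k (deriv χ) hd h0'
    obtain ⟨q, hqd, hqdeg⟩ := exists_antideriv p
    have hχdiff : Differentiable ℝ χ := hχ.differentiable (by simp)
    have hder : ∀ x, deriv (fun y => χ y - q.eval y) x = 0 := by
      intro x
      rw [deriv_fun_sub (hχdiff x) (q.differentiable x)]
      rw [Polynomial.deriv, hqd, ← hp x]
      ring
    have hdiff : Differentiable ℝ fun y => χ y - q.eval y :=
      hχdiff.sub q.differentiable
    have hconst := is_const_of_deriv_eq_zero hdiff hder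
    refine ⟨q + Polynomial.C (χ 0 - q.eval 0), ?_, fun x => ?_⟩
    · refine (Polynomial.degree_add_le _ _).trans_lt (max_lt ?_ ?_)
      · refine hqdeg.trans_lt ?_
        rcases hp' : p.degree with - | m
        · show (⊥ : WithBot ℕ) + (1 : WithBot ℕ) < ((k + 1 : ℕ) : WithBot ℕ)
          rw [WithBot.bot_add]
          exact WithBot.bot_lt_coe _
        · rw [hp'] at hpd
          have hm : m < k := WithBot.coe_lt_coe.mp hpd
          show (m : WithBot ℕ) + 1 < ((k + 1 : ℕ) : WithBot ℕ)
          have : ((m : WithBot ℕ) + 1) = ((m + 1 : ℕ) : WithBot ℕ) := by push_cast; ring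
          rw [this]
          exact_mod_cast Nat.succ_lt_succ hm
      · exact (Polynomial.degree_C_le).trans_lt (by exact_mod_cast WithBot.coe_lt_coe.mpr k.succ_pos)
    · have := hconst x 0
      simp only [Polynomial.eval_add, Polynomial.eval_C]
      linarith

/-! ### Setup on a compact set -/

/-- dot product on `ℝ^n`. -/
def ip {n : ℕ} (a x : Fin n → ℝ) : ℝ := ∑ i, a i * x i

lemma continuous_ipK (K : Set (Fin n → ℝ)) (a : Fin n → ℝ) :
    Continuous fun x : K => ip a (x : Fin n → ℝ) := by
  apply continuous_finset_sum
  exact fun i _ => continuous_const.mul ((continuous_apply i).comp continuous_subtype_val)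

lemma ip_smul (l : ℝ) (a x : Fin n → ℝ) : ip (l • a) x = l * ip a x := by
  simp only [ip, Pi.smul_apply, smul_eq_mul, Finset.mul_sum]
  exact Finset.sum_congr rfl fun i _ => by ring

/-- `x ↦ (a·x)^k * g (l * (a·x) + θ)` as a continuous map on `K`. -/
def mon (K : Set (Fin n → ℝ)) (k : ℕ) {g : ℝ → ℝ} (hg : Continuous g)
    (a : Fin n → ℝ) (l θ : ℝ) : C(K, ℝ) :=
  ⟨fun x => (ip a (x : Fin n → ℝ)) ^ k * g (l * ip a (x : Fin n → ℝ) + θ),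
    ((continuous_ipK K a).pow k).mul
      (hg.comp ((continuous_const.mul (continuous_ipK K a)).add continuous_const))⟩

/-- `x ↦ g (a·x + θ)` as a continuous map on `K`. -/
def rdg (K : Set (Fin n → ℝ)) {g : ℝ → ℝ} (hg : Continuous g) (a : Fin n → ℝ) (θ : ℝ) :
    C(K, ℝ) :=
  ⟨fun x => g (ip a (x : Fin n → ℝ) + θ),
    hg.comp ((continuous_ipK K a).add continuous_const)⟩

/-- The closure of the linear span of the `σ`-ridge functions on `K`. -/
def Vcl {σ : ℝ → ℝ} (hσc : Continuous σ) (K : Set (Fin n → ℝ)) [CompactSpace K] :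
    Submodule ℝ C(K, ℝ) :=
  (Submodule.span ℝ (Set.range fun p : (Fin n → ℝ) × ℝ => rdg K hσc p.1 p.2)).topologicalClosure

lemma rdg_mem_Vcl {σ : ℝ → ℝ} (hσc : Continuous σ) (K : Set (Fin n → ℝ)) [CompactSpace K]
    (a : Fin n → ℝ) (θ : ℝ) : rdg K hσc a θ ∈ Vcl hσc K :=
  Submodule.le_topologicalClosure _ (Submodule.subset_span ⟨(a, θ), rfl⟩)

lemma isClosed_Vcl {σ : ℝ → ℝ} (hσc : Continuous σ) (K : Set (Fin n → ℝ)) [CompactSpace K] :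
    IsClosed ((Vcl hσc K : Submodule ℝ C(K, ℝ)) : Set C(K, ℝ)) :=
  Submodule.isClosed_topologicalClosure _

/-! ### Integrals valued in a closed submodule -/

lemma integral_mem_of_closed {E : Type*} [NormedAddCommGroup E] [NormedSpace ℝ E]
    [CompleteSpace E] (W : Submodule ℝ E) (hW : IsClosed (W : Set E)) (Φ : ℝ → E)
    (hΦc : Continuous Φ) (hΦs : HasCompactSupport Φ) (hm : ∀ s, Φ s ∈ W) :
    (∫ s, Φ s) ∈ W := by
  haveI : CompleteSpace W := hW.completeSpace_coe
  set Φ' : ℝ → W := fun s => ⟨Φ s, hm s⟩ with hΦ'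
  have hΦ'c : Continuous Φ' := hΦc.subtype_mk _
  have hsupp : Function.support Φ' = Function.support Φ := by
    ext s
    simp [hΦ', Function.mem_support, Subtype.ext_iff]
  have hΦ's : HasCompactSupport Φ' := by
    rw [HasCompactSupport, tsupport, hsupp]
    exact hΦs
  have hint : Integrable Φ' := hΦ'c.integrable_of_hasCompactSupport hΦ's
  have key : (∫ s, Φ s) = (W.subtypeL (∫ s, Φ' s)) := by
    rw [← W.subtypeL.integral_comp_comm hint]
    rfl
  rw [key]
  exact (∫ s, Φ' s).2

/-! ### Step 1 : mollified ridge functions belong to the closed span -/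

lemma mollified_rdg_mem {σ : ℝ → ℝ} (hσb : ∃ B : ℝ, ∀ t, |σ t| ≤ B) (hσc : Continuous σ)
    (K : Set (Fin n → ℝ)) [CompactSpace K] (φ : ContDiffBump (0 : ℝ))
    (hψc : Continuous (φ.normed volume ⋆[lsmul ℝ ℝ] σ))
    (a : Fin n → ℝ) (θ : ℝ) :
    rdg K hψc a θ ∈ Vcl hσc K := by
  classical
  -- the integrand, as a continuous compactly supported map into C(K, ℝ)
  set G : C(ℝ × K, ℝ) :=
    ⟨fun p => σ (ip a (p.2 : Fin n → ℝ) + (θ - p.1)),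
      hσc.comp (((continuous_ipK K a).comp continuous_snd).add
        (continuous_const.sub continuous_fst))⟩ with hG
  set Φ : ℝ → C(K, ℝ) := fun s => φ.normed volume s • G.curry s with hΦ
  have hΦc : Continuous Φ := φ.continuous_normed.smul G.curry.continuous
  have hΦsupp : HasCompactSupport Φ := by
    have h1 : Function.support Φ ⊆ tsupport (φ.normed volume) := by
      intro s hs
      by_contra hns
      have : φ.normed volume s = 0 := image_eq_zero_of_notMem_tsupport hns
      exact hs (by simp [hΦ, this])
    exact HasCompactSupport.of_support_subset_isCompact φ.hasCompactSupport_normed h1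
  have hmem : ∀ s, Φ s ∈ Vcl hσc K := by
    intro s
    have : G.curry s = rdg K hσc a (θ - s) := by
      ext x
      rfl
    rw [hΦ]
    simp only []
    rw [this]
    exact Submodule.smul_mem _ _ (rdg_mem_Vcl hσc K a (θ - s))
  have hint : Integrable Φ := hΦc.integrable_of_hasCompactSupport hΦsupp
  have key : (∫ s, Φ s) = rdg K hψc a θ := by
    ext x
    have h1 : (∫ s, Φ s) x = ∫ s, Φ s x := by
      have := (ContinuousMap.evalCLM ℝ x).integral_comp_comm hint
      exact this.symm
    rw [h1]
    have h2 : ∀ s, Φ s x = φ.normed volume s * σ ((ip a (x : Fin n → ℝ) + θ) - s) := by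
      intro s
      simp only [hΦ, ContinuousMap.smul_apply, ContinuousMap.curry_apply, hG,
        ContinuousMap.coe_mk, smul_eq_mul]
      ring_nf
    simp_rw [h2]
    rw [rdg]
    simp only [ContinuousMap.coe_mk]
    rw [convolution_def]
    simp [lsmul_apply, smul_eq_mul]
  rw [← key]
  exact integral_mem_of_closed _ (isClosed_Vcl hσc K) Φ hΦc hΦsupp hmem

/-! ### Step 2 : the derivative trick -/

/-- If all the functions `x ↦ (a·x)^k χ(l (a·x) + θ)` lie in a closed submodule `W`, then so do
the functions with `χ` replaced by its derivative `χ'` and `k` by `k+1`. -/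
lemma mon_succ_mem (K : Set (Fin n → ℝ)) [CompactSpace K] (W : Submodule ℝ C(K, ℝ))
    (hWc : IsClosed (W : Set C(K, ℝ))) {χ χ' : ℝ → ℝ} (hχc : Continuous χ)
    (hχ'c : Continuous χ') (hd : ∀ u, HasDerivAt χ (χ' u) u) (k : ℕ) (a : Fin n → ℝ)
    (hmem : ∀ l θ : ℝ, mon K k hχc a l θ ∈ W) :
    ∀ l θ : ℝ, mon K (k + 1) hχ'c a l θ ∈ W := by
  intro l θ
  set ipc : C(K, ℝ) := ⟨fun x => ip a (x : Fin n → ℝ), continuous_ipK K a⟩ with hipc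
  set R : ℝ := ‖ipc‖ with hRdef
  have hR0 : 0 ≤ R := norm_nonneg _
  have hRb : ∀ x : K, |ip a (x : Fin n → ℝ)| ≤ R := fun x => ipc.norm_coe_le_norm x
  have hT : Tendsto (fun h : ℝ => h⁻¹ • (mon K k hχc a (l + h) θ - mon K k hχc a l θ))
      (𝓝[≠] (0 : ℝ)) (𝓝 (mon K (k + 1) hχ'c a l θ)) := by
    rw [Metric.tendsto_nhdsWithin_nhds]
    intro ε hε
    set ε' : ℝ := ε / (R ^ (k + 1) + 1) with hε'def
    have hε' : 0 < ε' := div_pos hε (by positivity)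
    set M : ℝ := (|l| + 1) * R with hMdef
    have hM0 : 0 ≤ M := by positivity
    have hUC := (isCompact_Icc (a := θ - M) (b := θ + M)).uniformContinuousOn_of_continuous
      hχ'c.continuousOn
    rw [Metric.uniformContinuousOn_iff] at hUC
    obtain ⟨δ, hδ, hδ'⟩ := hUC ε' hε'
    refine ⟨min 1 (δ / (R + 1)), by positivity, ?_⟩
    intro h hh hhd
    rw [Real.dist_eq, sub_zero] at hhd
    have hh0 : h ≠ 0 := hh
    have hh1 : |h| ≤ 1 := le_of_lt (lt_of_lt_of_le hhd (min_le_left _ _))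
    have hh2 : |h| < δ / (R + 1) := lt_of_lt_of_le hhd (min_le_right _ _)
    rw [dist_eq_norm]
    have key : ∀ x : K,
        ‖(h⁻¹ • (mon K k hχc a (l + h) θ - mon K k hχc a l θ) -
          mon K (k + 1) hχ'c a l θ) x‖ ≤ ε' * R ^ (k + 1) := by
      intro x
      set t : ℝ := ip a (x : Fin n → ℝ) with ht
      have htR : |t| ≤ R := hRb x
      set a₀ : ℝ := l * t + θ with ha₀
      set b₀ : ℝ := (l + h) * t + θ with hb₀
      have hb₀a₀ : b₀ - a₀ = h * t := by rw [hb₀, ha₀]; ring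
      -- apply the mean value inequality to `u ↦ χ u - u * χ' a₀` on `uIcc a₀ b₀`
      have hMVT : |χ b₀ - χ a₀ - (h * t) * χ' a₀| ≤ ε' * |h * t| := by
        have hconv : Convex ℝ (uIcc a₀ b₀) := by
          rw [uIcc]
          exact convex_Icc _ _
        have hderiv : ∀ u ∈ uIcc a₀ b₀,
            HasDerivWithinAt (fun u => χ u - u * χ' a₀) (χ' u - χ' a₀) (uIcc a₀ b₀) u :=
          fun u _ => ((hd u).sub (hasDerivAt_mul_const (χ' a₀))).hasDerivWithinAt
        have hdista : ∀ u ∈ uIcc a₀ b₀, dist u a₀ ≤ |h * t| := by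
          intro u hu
          refine (Real.dist_le_of_mem_uIcc hu left_mem_uIcc).trans_eq ?_
          rw [Real.dist_eq, abs_sub_comm, hb₀a₀]
        have hJmem : ∀ u ∈ uIcc a₀ b₀, u ∈ Icc (θ - M) (θ + M) := by
          intro u hu
          have h3 : |u - a₀| ≤ |h| * |t| := by
            rw [← abs_mul, ← Real.dist_eq]
            exact hdista u hu
          have h4 : |a₀ - θ| ≤ |l| * R := by
            rw [ha₀]
            have : l * t + θ - θ = l * t := by ring
            rw [this, abs_mul]
            exact mul_le_mul_of_nonneg_left htR (abs_nonneg l)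
          have h5 : |u - θ| ≤ M := by
            have : u - θ = (u - a₀) + (a₀ - θ) := by ring
            rw [this]
            refine (abs_add_le _ _).trans ?_
            rw [hMdef]
            have hht : |h| * |t| ≤ 1 * R :=
              mul_le_mul hh1 htR (abs_nonneg t) zero_le_one
            nlinarith
          rw [mem_Icc]
          constructor <;> [linarith [abs_le.mp h5]; linarith [abs_le.mp h5]]
        have hbound : ∀ u ∈ uIcc a₀ b₀, ‖χ' u - χ' a₀‖ ≤ ε' := by
          intro u hu
          have hlt : dist u a₀ < δ := by
            refine lt_of_le_of_lt (hdista u hu) ?_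
            rw [abs_mul]
            calc |h| * |t| ≤ |h| * (R + 1) :=
                  mul_le_mul_of_nonneg_left (by linarith) (abs_nonneg h)
              _ < (δ / (R + 1)) * (R + 1) := mul_lt_mul_of_pos_right hh2 (by positivity)
              _ = δ := div_mul_cancel₀ δ (by positivity)
          have := hδ' u (hJmem u hu) a₀ (hJmem a₀ left_mem_uIcc) hlt
          rw [Real.norm_eq_abs, ← Real.dist_eq]
          exact this.le
        have hfin := hconv.norm_image_sub_le_of_norm_hasDerivWithin_le hderiv hbound
          (left_mem_uIcc (a := a₀) (b := b₀))
          (right_mem_uIcc (a := a₀) (b := b₀))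
        simp only [Real.norm_eq_abs] at hfin
        have heq : χ b₀ - b₀ * χ' a₀ - (χ a₀ - a₀ * χ' a₀) = χ b₀ - χ a₀ - (b₀ - a₀) * χ' a₀ := by
          ring
        rw [heq, hb₀a₀] at hfin
        exact hfin
      -- conclude the pointwise bound
      have hQ : |h⁻¹ * (χ b₀ - χ a₀) - t * χ' a₀| ≤ ε' * R := by
        have h6 : |h * (h⁻¹ * (χ b₀ - χ a₀) - t * χ' a₀)| ≤ ε' * (|h| * R) := by
          have : h * (h⁻¹ * (χ b₀ - χ a₀) - t * χ' a₀) = χ b₀ - χ a₀ - (h * t) * χ' a₀ := by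
            field_simp
          rw [this]
          refine hMVT.trans ?_
          rw [abs_mul]
          exact mul_le_mul_of_nonneg_left
            (mul_le_mul_of_nonneg_left htR (abs_nonneg h)) hε'.le
        rw [abs_mul] at h6
        have hha : 0 < |h| := abs_pos.mpr hh0
        nlinarith [h6, hha, abs_nonneg (h⁻¹ * (χ b₀ - χ a₀) - t * χ' a₀)]
      have hval : (h⁻¹ • (mon K k hχc a (l + h) θ - mon K k hχc a l θ) -
          mon K (k + 1) hχ'c a l θ) x
          = t ^ k * (h⁻¹ * (χ b₀ - χ a₀) - t * χ' a₀) := by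
        simp only [ContinuousMap.sub_apply, ContinuousMap.smul_apply, mon,
          ContinuousMap.coe_mk, smul_eq_mul, ← ht, ← ha₀, ← hb₀]
        ring
      rw [hval, Real.norm_eq_abs, abs_mul, abs_pow]
      calc |t| ^ k * |h⁻¹ * (χ b₀ - χ a₀) - t * χ' a₀|
          ≤ R ^ k * (ε' * R) := by
            exact mul_le_mul (pow_le_pow_left₀ (abs_nonneg t) htR k) hQ (abs_nonneg _)
              (by positivity)
        _ = ε' * R ^ (k + 1) := by rw [pow_succ]; ring
    have hnorm : ‖h⁻¹ • (mon K k hχc a (l + h) θ - mon K k hχc a l θ) -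
        mon K (k + 1) hχ'c a l θ‖ ≤ ε' * R ^ (k + 1) :=
      (ContinuousMap.norm_le _ (by positivity)).mpr key
    calc ‖h⁻¹ • (mon K k hχc a (l + h) θ - mon K k hχc a l θ) -
        mon K (k + 1) hχ'c a l θ‖ ≤ ε' * R ^ (k + 1) := hnorm
      _ < ε' * (R ^ (k + 1) + 1) := by
          have := hε'
          nlinarith
      _ = ε := by
          rw [hε'def]
          field_simp
  refine hWc.mem_of_tendsto hT ?_
  filter_upwards with h
  exact W.smul_mem _ (W.sub_mem (hmem _ _) (hmem _ _))

/-! ### Step 3 : non-vanishing of some iterated derivative of a mollification -/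

lemma exists_nonvanishing {σ : ℝ → ℝ} (hσb : ∃ B : ℝ, ∀ t, |σ t| ≤ B)
    (hσnc : ∃ s t : ℝ, σ s ≠ σ t) (hσc : Continuous σ) (k : ℕ) :
    ∃ (φ : ContDiffBump (0 : ℝ)) (θ : ℝ),
      iteratedDeriv k (φ.normed volume ⋆[lsmul ℝ ℝ] σ) θ ≠ 0 := by
  by_contra hcon
  push_neg at hcon
  set φ : ℕ → ContDiffBump (0 : ℝ) := fun i =>
    ⟨1 / (i + 1), 2 / (i + 1), by positivity, by
      have h : (0:ℝ) < (i:ℝ) + 1 := by positivity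
      rw [div_lt_div_iff₀ h h]
      nlinarith⟩ with hφdef
  set ψ : ℕ → ℝ → ℝ := fun i => (φ i).normed volume ⋆[lsmul ℝ ℝ] σ with hψdef
  have hψs : ∀ i, ContDiff ℝ ((⊤ : ℕ∞) : WithTop ℕ∞) (ψ i) := fun i =>
    ((φ i).hasCompactSupport_normed).contDiff_convolution_left _
      ((φ i).contDiff_normed) (hσc.locallyIntegrable)
  have hpoly : ∀ i, ∃ p : Polynomial ℝ, p.degree < (k : ℕ) ∧ ∀ x, ψ i x = p.eval x := fun i =>
    poly_of_iteratedDeriv_zero k (ψ i) (hψs i) (fun x => hcon (φ i) x)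
  choose p hpdeg hpeq using hpoly
  have hlim : ∀ x : ℝ, Tendsto (fun i => ψ i x) atTop (𝓝 (σ x)) := by
    intro x
    apply ContDiffBump.convolution_tendsto_right_of_continuous (φ := φ) _ hσc x
    rw [show (fun i => (φ i).rOut) = fun i : ℕ => 2 / ((i : ℝ) + 1) from rfl]
    have := tendsto_one_div_add_atTop_nhds_zero_nat (𝕜 := ℝ)
    have h2 : Tendsto (fun i : ℕ => 2 * (1 / ((i : ℝ) + 1))) atTop (𝓝 (2 * 0)) :=
      this.const_mul 2
    simpa only [mul_one_div, mul_zero] using h2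
  set s : Finset ℕ := Finset.range k with hs
  set v : ℕ → ℝ := fun j => (j : ℝ) with hv
  have hinj : Set.InjOn v s := fun p1 _ p2 _ h => Nat.cast_injective h
  have hcard : ((k : ℕ) : WithBot ℕ) = (s.card : ℕ) := by simp [hs]
  have hrep : ∀ i, p i = Lagrange.interpolate s v (fun j => ψ i (v j)) := by
    intro i
    refine Lagrange.eq_interpolate_of_eval_eq _ hinj ?_ (fun j _ => (hpeq i (v j)).symm)
    rw [← hcard]
    exact hpdeg i
  set q : Polynomial ℝ := Lagrange.interpolate s v (fun j => σ (v j)) with hq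
  have hqeq : ∀ x, σ x = q.eval x := by
    intro x
    have h1 : Tendsto (fun i => (p i).eval x) atTop (𝓝 (q.eval x)) := by
      have : ∀ i, (p i).eval x = ∑ j ∈ s, ψ i (v j) * (Lagrange.basis s v j).eval x := by
        intro i
        rw [hrep i, Lagrange.interpolate_apply]
        simp [Polynomial.eval_finset_sum]
      simp_rw [this]
      have hq2 : q.eval x = ∑ j ∈ s, σ (v j) * (Lagrange.basis s v j).eval x := by
        rw [hq, Lagrange.interpolate_apply]
        simp [Polynomial.eval_finset_sum]
      rw [hq2]
      exact tendsto_finset_sum _ fun j _ => (hlim (v j)).mul_const _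
    have h2 : Tendsto (fun i => (p i).eval x) atTop (𝓝 (σ x)) := by
      have : (fun i => (p i).eval x) = fun i => ψ i x := by
        funext i
        exact (hpeq i x).symm
      rw [this]
      exact hlim x
    exact tendsto_nhds_unique h2 h1
  obtain ⟨B, hB⟩ := hσb
  have hdeg0 : q.degree ≤ 0 := by
    refine (Polynomial.abs_isBoundedUnder_iff q).mp ?_
    refine Filter.isBoundedUnder_of ⟨B, fun x => ?_⟩
    rw [← hqeq x]
    exact hB x
  obtain ⟨c, hc⟩ : ∃ c, q = Polynomial.C c := ⟨q.coeff 0, Polynomial.eq_C_of_degree_le_zero hdeg0⟩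
  obtain ⟨s₁, t₁, hst⟩ := hσnc
  apply hst
  rw [hqeq s₁, hqeq t₁, hc]
  simp

/-! ### Step 4 : monomials of ridge functions -/

lemma pow_rdg_mem {σ : ℝ → ℝ} (hσb : ∃ B : ℝ, ∀ t, |σ t| ≤ B)
    (hσnc : ∃ s t : ℝ, σ s ≠ σ t) (hσc : Continuous σ)
    (K : Set (Fin n → ℝ)) [CompactSpace K] (k : ℕ) (a : Fin n → ℝ) :
    (⟨fun x => (ip a (x : Fin n → ℝ)) ^ k, (continuous_ipK K a).pow k⟩ : C(K, ℝ))
      ∈ Vcl hσc K := by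
  obtain ⟨φ, θ, hne⟩ := exists_nonvanishing hσb hσnc hσc k
  set ψ : ℝ → ℝ := φ.normed volume ⋆[lsmul ℝ ℝ] σ with hψ
  have hψs : ContDiff ℝ ((⊤ : ℕ∞) : WithTop ℕ∞) ψ :=
    φ.hasCompactSupport_normed.contDiff_convolution_left _ φ.contDiff_normed
      hσc.locallyIntegrable
  have hχc : ∀ m : ℕ, Continuous (iteratedDeriv m ψ) := fun m =>
    hψs.continuous_iteratedDeriv m (by exact_mod_cast le_top)
  have hmem : ∀ m : ℕ, ∀ l θ' : ℝ, mon K m (hχc m) a l θ' ∈ Vcl hσc K := by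
    intro m
    induction m with
    | zero =>
      intro l θ'
      have h0 : mon K 0 (hχc 0) a l θ' = rdg K hψs.continuous (l • a) θ' := by
        ext x
        simp [mon, rdg, iteratedDeriv_zero, ip_smul]
      rw [h0]
      exact mollified_rdg_mem hσb hσc K φ hψs.continuous (l • a) θ'
    | succ m ih =>
      intro l θ'
      have hdiff : Differentiable ℝ (iteratedDeriv m ψ) :=
        hψs.differentiable_iteratedDeriv m (by exact_mod_cast lt_top_iff_ne_top.mpr (by simp))
      have hd : ∀ u, HasDerivAt (iteratedDeriv m ψ) (iteratedDeriv (m + 1) ψ u) u := by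
        intro u
        rw [iteratedDeriv_succ]
        exact (hdiff u).hasDerivAt
      exact mon_succ_mem K (Vcl hσc K) (isClosed_Vcl hσc K) (hχc m) (hχc (m + 1)) hd m a ih l θ'
  have hval := hmem k 0 θ
  have hrw : (⟨fun x => (ip a (x : Fin n → ℝ)) ^ k, (continuous_ipK K a).pow k⟩ : C(K, ℝ))
      = (iteratedDeriv k ψ θ)⁻¹ • mon K k (hχc k) a 0 θ := by
    ext x
    simp only [mon, ContinuousMap.smul_apply, ContinuousMap.coe_mk, smul_eq_mul, zero_mul,
      zero_add]
    field_simp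
  rw [hrw]
  exact Submodule.smul_mem _ _ hval

lemma poly_rdg_mem {σ : ℝ → ℝ} (hσb : ∃ B : ℝ, ∀ t, |σ t| ≤ B)
    (hσnc : ∃ s t : ℝ, σ s ≠ σ t) (hσc : Continuous σ)
    (K : Set (Fin n → ℝ)) [CompactSpace K] (p : Polynomial ℝ) (a : Fin n → ℝ) :
    (⟨fun x => p.eval (ip a (x : Fin n → ℝ)),
      p.continuous.comp (continuous_ipK K a)⟩ : C(K, ℝ)) ∈ Vcl hσc K := by
  have hrw : (⟨fun x => p.eval (ip a (x : Fin n → ℝ)),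
      p.continuous.comp (continuous_ipK K a)⟩ : C(K, ℝ))
      = ∑ m ∈ p.support, p.coeff m •
        (⟨fun x => (ip a (x : Fin n → ℝ)) ^ m, (continuous_ipK K a).pow m⟩ : C(K, ℝ)) := by
    ext x
    simp only [ContinuousMap.coe_mk, ContinuousMap.coe_sum, Finset.sum_apply,
      ContinuousMap.smul_apply, smul_eq_mul]
    conv_lhs => rw [Polynomial.eval_eq_sum, Polynomial.sum]
  rw [hrw]
  exact Submodule.sum_mem _ fun m _ =>
    Submodule.smul_mem _ _ (pow_rdg_mem hσb hσnc hσc K m a)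

/-! ### Step 5 : cosine ridge functions -/

lemma cos_rdg_mem {σ : ℝ → ℝ} (hσb : ∃ B : ℝ, ∀ t, |σ t| ≤ B)
    (hσnc : ∃ s t : ℝ, σ s ≠ σ t) (hσc : Continuous σ)
    (K : Set (Fin n → ℝ)) [CompactSpace K] (a : Fin n → ℝ) (b : ℝ) :
    rdg K Real.continuous_cos a b ∈ Vcl hσc K := by
  set ipc : C(K, ℝ) := ⟨fun x => ip a (x : Fin n → ℝ), continuous_ipK K a⟩ with hipc
  set R : ℝ := ‖ipc‖ with hRdef
  have hRb : ∀ x : K, |ip a (x : Fin n → ℝ)| ≤ R := fun x => ipc.norm_coe_le_norm x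
  have hmem : rdg K Real.continuous_cos a b ∈ closure ((Vcl hσc K : Submodule ℝ C(K, ℝ)) :
      Set C(K, ℝ)) := by
    rw [Metric.mem_closure_iff]
    intro ε hε
    obtain ⟨p, hp⟩ := exists_polynomial_near_of_continuousOn (-R) R
      (fun t => Real.cos (t + b)) (Real.continuous_cos.comp (by continuity)).continuousOn ε hε
    refine ⟨⟨fun x => p.eval (ip a (x : Fin n → ℝ)),
      p.continuous.comp (continuous_ipK K a)⟩, poly_rdg_mem hσb hσnc hσc K p a, ?_⟩
    rw [ContinuousMap.dist_lt_iff hε]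
    intro x
    have hx : ip a (x : Fin n → ℝ) ∈ Set.Icc (-R) R := by
      rcases abs_le.mp (hRb x) with ⟨h1, h2⟩
      exact ⟨h1, h2⟩
    have := hp _ hx
    rw [Real.dist_eq]
    rw [abs_sub_comm] at this
    simpa [rdg] using this
  rwa [(isClosed_Vcl hσc K).closure_eq] at hmem

/-! ### Step 6 : the cosine subalgebra and Stone–Weierstrass -/

lemma ip_add (a a' x : Fin n → ℝ) : ip (a + a') x = ip a x + ip a' x := by
  simp only [ip, Pi.add_apply, ← Finset.sum_add_distrib]
  exact Finset.sum_congr rfl fun i _ => by ring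

lemma ip_sub (a a' x : Fin n → ℝ) : ip (a - a') x = ip a x - ip a' x := by
  simp only [ip, Pi.sub_apply, ← Finset.sum_sub_distrib]
  exact Finset.sum_congr rfl fun i _ => by ring

/-- The set of cosine ridge functions on `K`. -/
def cosSet (K : Set (Fin n → ℝ)) : Set C(K, ℝ) :=
  Set.range fun p : (Fin n → ℝ) × ℝ => rdg K Real.continuous_cos p.1 p.2

lemma cos_span_mul_mem (K : Set (Fin n → ℝ)) [CompactSpace K] :
    ∀ f ∈ Submodule.span ℝ (cosSet K), ∀ g ∈ Submodule.span ℝ (cosSet K),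
      f * g ∈ Submodule.span ℝ (cosSet K) := by
  intro f hf g hg
  induction hf, hg using Submodule.span_induction₂ with
  | mem_mem x y hx hy =>
    obtain ⟨⟨a, b⟩, rfl⟩ := hx
    obtain ⟨⟨a', b'⟩, rfl⟩ := hy
    have key : rdg K Real.continuous_cos a b * rdg K Real.continuous_cos a' b'
        = (1 / 2 : ℝ) • rdg K Real.continuous_cos (a + a') (b + b')
          + (1 / 2 : ℝ) • rdg K Real.continuous_cos (a - a') (b - b') := by
      have hcc : ∀ p q : ℝ, Real.cos p * Real.cos q
          = 1 / 2 * Real.cos (p + q) + 1 / 2 * Real.cos (p - q) := by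
        intro p q
        rw [Real.cos_add, Real.cos_sub]
        ring
      ext x
      simp only [ContinuousMap.mul_apply, ContinuousMap.add_apply, ContinuousMap.smul_apply,
        rdg, ContinuousMap.coe_mk, smul_eq_mul, ip_add, ip_sub]
      have h1 : ip a (x : Fin n → ℝ) + ip a' (x : Fin n → ℝ) + (b + b')
          = (ip a (x : Fin n → ℝ) + b) + (ip a' (x : Fin n → ℝ) + b') := by ring
      have h2 : ip a (x : Fin n → ℝ) - ip a' (x : Fin n → ℝ) + (b - b')
          = (ip a (x : Fin n → ℝ) + b) - (ip a' (x : Fin n → ℝ) + b') := by ring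
      rw [h1, h2]
      exact hcc _ _
    rw [key]
    refine Submodule.add_mem _ ?_ ?_ <;>
      exact Submodule.smul_mem _ _ (Submodule.subset_span ⟨(_, _), rfl⟩)
  | zero_left y hy =>
    have : (0 : C(K, ℝ)) * y = 0 := by ring
    rw [this]
    exact Submodule.zero_mem _
  | zero_right x hx =>
    have : x * (0 : C(K, ℝ)) = 0 := by ring
    rw [this]
    exact Submodule.zero_mem _
  | add_left x y z hx hy hz h1 h2 =>
    have : (x + y) * z = x * z + y * z := by ring
    rw [this]
    exact Submodule.add_mem _ h1 h2
  | add_right x y z hx hy hz h1 h2 =>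
    have : x * (y + z) = x * y + x * z := by ring
    rw [this]
    exact Submodule.add_mem _ h1 h2
  | smul_left r x y hx hy h1 =>
    have : (r • x) * y = r • (x * y) := by
      ext z
      simp only [ContinuousMap.mul_apply, ContinuousMap.smul_apply, smul_eq_mul]
      ring
    rw [this]
    exact Submodule.smul_mem _ _ h1
  | smul_right r x y hx hy h1 =>
    have : x * (r • y) = r • (x * y) := by
      ext z
      simp only [ContinuousMap.mul_apply, ContinuousMap.smul_apply, smul_eq_mul]
      ring
    rw [this]
    exact Submodule.smul_mem _ _ h1

/-- The subalgebra of `C(K, ℝ)` generated by cosine ridge functions. -/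
def cosAlg (K : Set (Fin n → ℝ)) [CompactSpace K] : Subalgebra ℝ C(K, ℝ) :=
  Algebra.adjoin ℝ (cosSet K)

lemma cosAlg_le_span (K : Set (Fin n → ℝ)) [CompactSpace K] :
    ((cosAlg K : Subalgebra ℝ C(K, ℝ)) : Set C(K, ℝ))
      ⊆ ((Submodule.span ℝ (cosSet K) : Submodule ℝ C(K, ℝ)) : Set C(K, ℝ)) := by
  have main : ∀ f ∈ Algebra.adjoin ℝ (cosSet K), f ∈ Submodule.span ℝ (cosSet K) := by
    intro f hf
    induction hf using Algebra.adjoin_induction with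
    | mem x hx => exact Submodule.subset_span hx
    | algebraMap r =>
      have hone : (1 : C(K, ℝ)) = rdg K Real.continuous_cos 0 0 := by
        ext x
        simp [rdg, ip]
      have halg : (algebraMap ℝ C(K, ℝ)) r = r • (1 : C(K, ℝ)) := by
        ext x
        simp [Algebra.algebraMap_eq_smul_one]
      rw [halg, hone]
      exact Submodule.smul_mem _ _ (Submodule.subset_span ⟨(0, 0), rfl⟩)
    | add x y hx hy h1 h2 => exact Submodule.add_mem _ h1 h2
    | mul x y hx hy h1 h2 => exact cos_span_mul_mem K _ h1 _ h2
  intro f hf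
  exact main f hf

lemma cosAlg_separatesPoints (K : Set (Fin n → ℝ)) [CompactSpace K] :
    (cosAlg K).SeparatesPoints := by
  intro x y hxy
  have hxy' : (x : Fin n → ℝ) ≠ (y : Fin n → ℝ) := Subtype.coe_injective.ne hxy
  obtain ⟨i, hi⟩ := Function.ne_iff.mp hxy'
  set u : ℝ := (x : Fin n → ℝ) i with hu
  set v : ℝ := (y : Fin n → ℝ) i with hv
  set l : ℝ := Real.pi / (2 * (|u| + |v| + 1)) with hl
  have hl0 : 0 < l := by
    rw [hl]
    positivity
  set a : Fin n → ℝ := l • (Pi.single i 1 : Fin n → ℝ) with ha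
  have hipz : ∀ z : Fin n → ℝ, ip a z = l * z i := by
    intro z
    rw [ha, ip_smul]
    congr 1
    simp [ip, Pi.single_apply]
  refine ⟨⇑(rdg K Real.continuous_cos a (Real.pi / 2)),
    ⟨rdg K Real.continuous_cos a (Real.pi / 2),
      Algebra.subset_adjoin (s := cosSet K) ⟨(a, Real.pi / 2), rfl⟩, rfl⟩, ?_⟩
  simp only [rdg, ContinuousMap.coe_mk, hipz]
  have hbound : ∀ w : ℝ, l * |w| < Real.pi / 2 → l * w + Real.pi / 2 ∈ Set.Icc 0 Real.pi := by
    intro w hw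
    rcases abs_lt.mp (show |l * w| < Real.pi / 2 by
        rw [abs_mul, abs_of_pos hl0]; exact hw) with ⟨h1, h2⟩
    constructor <;> [linarith; linarith]
  have hlu : l * |u| < Real.pi / 2 := by
    rw [hl]
    rw [div_mul_eq_mul_div, div_lt_div_iff₀ (by positivity) (by norm_num)]
    have hpi : 0 < Real.pi := Real.pi_pos
    nlinarith [abs_nonneg u, abs_nonneg v]
  have hlv : l * |v| < Real.pi / 2 := by
    rw [hl]
    rw [div_mul_eq_mul_div, div_lt_div_iff₀ (by positivity) (by norm_num)]
    have hpi : 0 < Real.pi := Real.pi_pos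
    nlinarith [abs_nonneg u, abs_nonneg v]
  intro heq
  have := Real.injOn_cos (hbound u hlu) (hbound v hlv) heq
  have huv : u = v := by
    have hll : l ≠ 0 := ne_of_gt hl0
    field_simp at this
    have h' : l * (u - v) = 0 := by linarith
    rcases mul_eq_zero.mp h' with h | h
    · exact absurd h hll
    · linarith
  exact hi huv

lemma Vcl_eq_top {σ : ℝ → ℝ} (hσb : ∃ B : ℝ, ∀ t, |σ t| ≤ B)
    (hσnc : ∃ s t : ℝ, σ s ≠ σ t) (hσc : Continuous σ)
    (K : Set (Fin n → ℝ)) [CompactSpace K] : Vcl hσc K = ⊤ := by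
  have hA : (cosAlg K).topologicalClosure = ⊤ :=
    ContinuousMap.subalgebra_topologicalClosure_eq_top_of_separatesPoints _
      (cosAlg_separatesPoints K)
  rw [eq_top_iff]
  intro g _
  have hg : g ∈ closure ((cosAlg K : Subalgebra ℝ C(K, ℝ)) : Set C(K, ℝ)) := by
    have : g ∈ (cosAlg K).topologicalClosure := by
      rw [hA]
      trivial
    exact this
  have hsub : ((cosAlg K : Subalgebra ℝ C(K, ℝ)) : Set C(K, ℝ))
      ⊆ ((Vcl hσc K : Submodule ℝ C(K, ℝ)) : Set C(K, ℝ)) := by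
    intro f hf
    have hf' : f ∈ Submodule.span ℝ (cosSet K) := cosAlg_le_span K hf
    refine Submodule.span_le.mpr ?_ hf'
    rintro - ⟨⟨a, b⟩, rfl⟩
    exact cos_rdg_mem hσb hσnc hσc K a b
  have hfin := closure_mono hsub hg
  rwa [(isClosed_Vcl hσc K).closure_eq] at hfin

end

end MLPaux

/-- **Universal approximation, bounded non-constant continuous activation.**
Let `σ : ℝ → ℝ` be a bounded, non-constant, continuous function. Then the set of
`σ`-multilayer perceptrons from `ℝ^n` to `ℝ` is dense in `C(ℝ^n, ℝ)` for the topology of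
uniform convergence on compact sets: for every continuous `f : ℝ^n → ℝ`, every compact
`K ⊆ ℝ^n` and every `ε > 0` there is a `σ`-MLP `F` with `sup_{x ∈ K} |f x - F x| < ε`. -/
theorem mlp_universal_approximation
    (σ : ℝ → ℝ) (hσb : ∃ B : ℝ, ∀ t, |σ t| ≤ B)
    (hσnc : ∃ s t : ℝ, σ s ≠ σ t) (hσc : Continuous σ)
    (n : ℕ) (f : (Fin n → ℝ) → ℝ) (hf : Continuous f)
    (K : Set (Fin n → ℝ)) (hK : IsCompact K) (ε : ℝ) (hε : 0 < ε) :
    ∃ F : (Fin n → ℝ) → ℝ, IsMLP σ F ∧ ∀ x ∈ K, |f x - F x| < ε := by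
  haveI : CompactSpace K := isCompact_iff_compactSpace.mp hK
  set fK : C(K, ℝ) := ⟨fun x => f (x : Fin n → ℝ), hf.comp continuous_subtype_val⟩ with hfKdef
  have hfK : fK ∈ MLPaux.Vcl hσc K := by
    rw [MLPaux.Vcl_eq_top hσb hσnc hσc K]
    trivial
  have hclos : fK ∈ closure ((Submodule.span ℝ
      (Set.range fun p : (Fin n → ℝ) × ℝ => MLPaux.rdg K hσc p.1 p.2) :
        Submodule ℝ C(K, ℝ)) : Set C(K, ℝ)) := hfK
  rw [Metric.mem_closure_iff] at hclos
  obtain ⟨v, hvmem, hvdist⟩ := hclos ε hε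
  rw [SetLike.mem_coe, Submodule.mem_span_set'] at hvmem
  obtain ⟨m, c, gs, hsum⟩ := hvmem
  choose pj hpj using fun j => (gs j).2
  refine ⟨fun y => ∑ j, c j * σ (MLPaux.ip ((pj j).1) y + (pj j).2), ?_, ?_⟩
  · -- it is an MLP with one hidden layer
    set M : Matrix (Fin m) (Fin n) ℝ := fun j i => (pj j).1 i with hM
    set bb : Fin m → ℝ := fun j => (pj j).2 with hbb
    set Cm : Matrix (Fin 1) (Fin m) ℝ := fun _ j => c j with hCm
    refine ⟨fun x => Cm.mulVec (fun i => σ (M.mulVec x i + bb i)) + (0 : Fin 1 → ℝ),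
      IsMLPCore.comp M bb (IsMLPCore.affine Cm (0 : Fin 1 → ℝ)), ?_⟩
    intro x
    simp only [Pi.add_apply, Pi.zero_apply, add_zero, Matrix.mulVec, dotProduct,
      MLPaux.ip]
    rfl
  · intro x hx
    have hvx : v ⟨x, hx⟩ = ∑ j, c j * σ (MLPaux.ip ((pj j).1) x + (pj j).2) := by
      calc v ⟨x, hx⟩ = (∑ j, c j • (gs j : C(K, ℝ))) ⟨x, hx⟩ := by rw [hsum]
        _ = ∑ j, c j * (gs j : C(K, ℝ)) ⟨x, hx⟩ := by
            simp [ContinuousMap.coe_sum, Finset.sum_apply]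
        _ = ∑ j, c j * σ (MLPaux.ip ((pj j).1) x + (pj j).2) := by
            refine Finset.sum_congr rfl fun j _ => ?_
            rw [← hpj j]
            rfl
    have h1 : |f x - ∑ j, c j * σ (MLPaux.ip ((pj j).1) x + (pj j).2)|
        = |fK ⟨x, hx⟩ - v ⟨x, hx⟩| := by
      rw [hvx]
      rfl
    rw [h1]
    calc |fK ⟨x, hx⟩ - v ⟨x, hx⟩| = dist (fK ⟨x, hx⟩) (v ⟨x, hx⟩) := (Real.dist_eq _ _).symm
      _ ≤ dist fK v := ContinuousMap.dist_apply_le_dist _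
      _ < ε := hvdist
end

section
/- Let σ = ReLU, i.e., σ(t) = max(0, t). Then the set of ReLU-multilayer perceptrons from ℝ^n to ℝ is dense in C(ℝ^n, ℝ) for the topology of uniform convergence on compact sets: for every continuous function f : ℝ^n → ℝ, every compact set K ⊂ ℝ^n, and every ε > 0, there exists a ReLU-multilayer perceptron F : ℝ^n → ℝ such that sup_{x ∈ K} |f(x) - F(x)| < ε. -/
open Matrix

abbrev Rl : ℝ → ℝ := fun t => max 0 t

lemma Rl_sub (t : ℝ) : Rl t - Rl (-t) = t := by
  simp only [Rl, max_def]; split_ifs <;> linarith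

def vcat {a b n : ℕ} (M : Matrix (Fin a) (Fin n) ℝ) (M' : Matrix (Fin b) (Fin n) ℝ) :
    Matrix (Fin (a + b)) (Fin n) ℝ := Matrix.of (Fin.append M M')

def hcat {k a b : ℕ} (M : Matrix (Fin k) (Fin a) ℝ) (M' : Matrix (Fin k) (Fin b) ℝ) :
    Matrix (Fin k) (Fin (a + b)) ℝ := Matrix.of fun i => Fin.append (M i) (M' i)

lemma vcat_mulVec {a b n : ℕ} (M : Matrix (Fin a) (Fin n) ℝ) (M' : Matrix (Fin b) (Fin n) ℝ)
    (x : Fin n → ℝ) :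
    (vcat M M').mulVec x = Fin.append (M.mulVec x) (M'.mulVec x) := by
  funext i
  refine Fin.addCases (fun i => ?_) (fun i => ?_) i
  · simp [vcat, Matrix.mulVec]
    erw [Fin.append_left]
  · simp [vcat, Matrix.mulVec]
    erw [Fin.append_right]

lemma hcat_mulVec {k a b : ℕ} (M : Matrix (Fin k) (Fin a) ℝ) (M' : Matrix (Fin k) (Fin b) ℝ)
    (u : Fin a → ℝ) (v : Fin b → ℝ) :
    (hcat M M').mulVec (Fin.append u v) = M.mulVec u + M'.mulVec v := by
  funext i
  simp [hcat, Matrix.mulVec, dotProduct, Fin.sum_univ_add]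

lemma append_add {a b : ℕ} (u v : Fin a → ℝ) (u' v' : Fin b → ℝ) :
    Fin.append u u' + Fin.append v v' = Fin.append (u + v) (u' + v') := by
  funext i
  refine Fin.addCases (fun i => ?_) (fun i => ?_) i <;> simp

lemma sigma_append {a b : ℕ} (σ : ℝ → ℝ) (u : Fin a → ℝ) (v : Fin b → ℝ) :
    (fun i => σ (Fin.append u v i)) = Fin.append (fun i => σ (u i)) (fun i => σ (v i)) := by
  funext i
  refine Fin.addCases (fun i => ?_) (fun i => ?_) i <;> simp

lemma IsMLPCore.precomp {σ : ℝ → ℝ} {k m : ℕ} {F : (Fin k → ℝ) → (Fin m → ℝ)}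
    (hF : IsMLPCore σ F) :
    ∀ {n : ℕ} (M : Matrix (Fin k) (Fin n) ℝ) (b : Fin k → ℝ),
      IsMLPCore σ (fun x => F (M.mulVec x + b)) := by
  induction hF with
  | affine M' b' =>
      intro n M b
      have h : (fun x => M'.mulVec (M.mulVec x + b) + b')
          = fun x : Fin n → ℝ => (M' * M).mulVec x + (M'.mulVec b + b') := by
        funext x
        simp [Matrix.mulVec_add, Matrix.mulVec_mulVec, add_assoc]
      exact h ▸ IsMLPCore.affine _ _
  | @comp _ k₁ _ M₁ b₁ F' hF' ih =>
      intro n M b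
      have h : (fun x => F' (fun i => σ (M₁.mulVec (M.mulVec x + b) i + b₁ i)))
          = fun x : Fin n → ℝ =>
              F' (fun i => σ ((M₁ * M).mulVec x i + (M₁.mulVec b + b₁) i)) := by
        funext x
        congr 1
        funext i
        simp [Matrix.mulVec_add, Matrix.mulVec_mulVec, add_assoc]
      exact h ▸ IsMLPCore.comp _ _ hF'

lemma IsMLPCore.compose {σ : ℝ → ℝ} {k m : ℕ} {H : (Fin k → ℝ) → (Fin m → ℝ)}
    (hH : IsMLPCore σ H) {n : ℕ} {F : (Fin n → ℝ) → (Fin k → ℝ)} (hF : IsMLPCore σ F) :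
    IsMLPCore σ (fun x => H (F x)) := by
  induction hF with
  | affine M b => exact hH.precomp M b
  | comp M b hF' ih => exact IsMLPCore.comp M b (ih hH)

set_option maxHeartbeats 1000000 in
/-- Parallel composition of an affine map with `G ∘ affine`. -/
lemma IsMLPCore.affine_par {k m' : ℕ} {G : (Fin k → ℝ) → (Fin m' → ℝ)}
    (hG : IsMLPCore Rl G) :
    ∀ {n m : ℕ} (M : Matrix (Fin m) (Fin n) ℝ) (b : Fin m → ℝ)
      (P : Matrix (Fin k) (Fin n) ℝ) (c : Fin k → ℝ),
      IsMLPCore Rl (fun x => Fin.append (M.mulVec x + b) (G (P.mulVec x + c))) := by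
  induction hG with
  | affine M' b' =>
      intro n m M b P c
      have h : (fun x : Fin n → ℝ =>
            Fin.append (M.mulVec x + b) (M'.mulVec (P.mulVec x + c) + b'))
          = fun x : Fin n → ℝ =>
            (vcat M (M' * P)).mulVec x + Fin.append b (M'.mulVec c + b') := by
        funext x
        rw [vcat_mulVec, append_add]
        congr 1
        simp [Matrix.mulVec_add, Matrix.mulVec_mulVec, add_assoc]
      exact h ▸ IsMLPCore.affine _ _
  | @comp _ k₁ _ M₁ b₁ G' hG' ih =>
      intro n m M b P c
      -- hidden layer
      set A : Matrix (Fin ((m + m) + k₁)) (Fin n) ℝ := vcat (vcat M (-M)) (M₁ * P) with hA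
      set β : Fin ((m + m) + k₁) → ℝ :=
        Fin.append (Fin.append b (-b)) (M₁.mulVec c + b₁) with hβ
      -- the tail network, by IH
      have tail := ih (hcat (hcat (1 : Matrix (Fin m) (Fin m) ℝ)
            (-1 : Matrix (Fin m) (Fin m) ℝ)) (0 : Matrix (Fin m) (Fin k₁) ℝ)) 0
          (hcat (hcat (0 : Matrix (Fin k₁) (Fin m) ℝ) (0 : Matrix (Fin k₁) (Fin m) ℝ))
            (1 : Matrix (Fin k₁) (Fin k₁) ℝ)) 0
      have main := IsMLPCore.comp A β tail
      have h : (fun x : Fin n → ℝ =>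
            (fun z => Fin.append
              ((hcat (hcat (1 : Matrix (Fin m) (Fin m) ℝ)
                  (-1 : Matrix (Fin m) (Fin m) ℝ))
                (0 : Matrix (Fin m) (Fin k₁) ℝ)).mulVec z + 0)
              (G' ((hcat (hcat (0 : Matrix (Fin k₁) (Fin m) ℝ)
                  (0 : Matrix (Fin k₁) (Fin m) ℝ))
                (1 : Matrix (Fin k₁) (Fin k₁) ℝ)).mulVec z + 0)))
            (fun i => Rl (A.mulVec x i + β i)))
          = fun x : Fin n → ℝ =>
              Fin.append (M.mulVec x + b)
                (G' (fun i => Rl (M₁.mulVec (P.mulVec x + c) i + b₁ i))) := by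
        funext x
        set u : Fin m → ℝ := M.mulVec x + b with hu
        set w : Fin k₁ → ℝ := M₁.mulVec (P.mulVec x + c) + b₁ with hw
        have hy : (fun i => Rl (A.mulVec x i + β i))
            = Fin.append (Fin.append (fun i => Rl (u i)) (fun i => Rl (-(u i))))
                (fun i => Rl (w i)) := by
          have hAx : A.mulVec x + β
              = Fin.append (Fin.append u (-u)) w := by
            rw [hA, hβ, vcat_mulVec, vcat_mulVec, append_add, append_add]
            have e1 : (-M).mulVec x + (-b) = -u := by
              rw [hu, Matrix.neg_mulVec]; abel
            have e2 : (M₁ * P).mulVec x + (M₁.mulVec c + b₁) = w := by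
              rw [hw, Matrix.mulVec_add, Matrix.mulVec_mulVec, add_assoc]
            rw [e1, e2, ← hu]
          have e : (fun i => Rl (A.mulVec x i + β i)) = fun i => Rl ((A.mulVec x + β) i) := rfl
          rw [e, hAx, sigma_append, sigma_append]
          rfl
        rw [hy]
        simp only [hcat_mulVec, Matrix.one_mulVec, Matrix.zero_mulVec, Matrix.neg_mulVec,
          add_zero, zero_add]
        refine congrArg₂ Fin.append ?_ (congrArg G' ?_)
        · funext i
          have h2 := Rl_sub (u i)
          simp only [Pi.add_apply, Pi.neg_apply]
          linarith
        · funext i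
          simp [hw]
      exact h ▸ main

set_option maxHeartbeats 1000000 in
/-- Parallel composition of two MLP cores (each precomposed with an affine map). -/
lemma IsMLPCore.par2 {a m : ℕ} {F : (Fin a → ℝ) → (Fin m → ℝ)} (hF : IsMLPCore Rl F) :
    ∀ {k m' : ℕ} {G : (Fin k → ℝ) → (Fin m' → ℝ)}, IsMLPCore Rl G →
    ∀ {n : ℕ} (R : Matrix (Fin a) (Fin n) ℝ) (r : Fin a → ℝ)
      (P : Matrix (Fin k) (Fin n) ℝ) (c : Fin k → ℝ),
      IsMLPCore Rl (fun x => Fin.append (F (R.mulVec x + r)) (G (P.mulVec x + c))) := by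
  induction hF with
  | affine M' b' =>
      intro k m' G hG n R r P c
      have h : (fun x : Fin n → ℝ =>
            Fin.append (M'.mulVec (R.mulVec x + r) + b') (G (P.mulVec x + c)))
          = fun x : Fin n → ℝ =>
            Fin.append ((M' * R).mulVec x + (M'.mulVec r + b')) (G (P.mulVec x + c)) := by
        funext x
        rw [Matrix.mulVec_add, Matrix.mulVec_mulVec, add_assoc]
      exact h ▸ hG.affine_par _ _ _ _
  | @comp _ k₁ _ M₁ b₁ F' hF' ih =>
      intro k m' G hG n R r P c
      set A : Matrix (Fin (k₁ + (k + k))) (Fin n) ℝ := vcat (M₁ * R) (vcat P (-P)) with hA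
      set β : Fin (k₁ + (k + k)) → ℝ :=
        Fin.append (M₁.mulVec r + b₁) (Fin.append c (-c)) with hβ
      have tail := ih hG (hcat (1 : Matrix (Fin k₁) (Fin k₁) ℝ)
          (hcat (0 : Matrix (Fin k₁) (Fin k) ℝ) (0 : Matrix (Fin k₁) (Fin k) ℝ))) 0
          (hcat (0 : Matrix (Fin k) (Fin k₁) ℝ)
            (hcat (1 : Matrix (Fin k) (Fin k) ℝ) (-1 : Matrix (Fin k) (Fin k) ℝ))) 0
      have main := IsMLPCore.comp A β tail
      have h : (fun x : Fin n → ℝ =>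
            (fun z => Fin.append
              (F' ((hcat (1 : Matrix (Fin k₁) (Fin k₁) ℝ)
                (hcat (0 : Matrix (Fin k₁) (Fin k) ℝ)
                  (0 : Matrix (Fin k₁) (Fin k) ℝ))).mulVec z + 0))
              (G ((hcat (0 : Matrix (Fin k) (Fin k₁) ℝ)
                (hcat (1 : Matrix (Fin k) (Fin k) ℝ)
                  (-1 : Matrix (Fin k) (Fin k) ℝ))).mulVec z + 0)))
            (fun i => Rl (A.mulVec x i + β i)))
          = fun x : Fin n → ℝ =>
              Fin.append (F' (fun i => Rl (M₁.mulVec (R.mulVec x + r) i + b₁ i)))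
                (G (P.mulVec x + c)) := by
        funext x
        set w : Fin k₁ → ℝ := M₁.mulVec (R.mulVec x + r) + b₁ with hw
        set u : Fin k → ℝ := P.mulVec x + c with hu
        have hy : (fun i => Rl (A.mulVec x i + β i))
            = Fin.append (fun i => Rl (w i))
                (Fin.append (fun i => Rl (u i)) (fun i => Rl (-(u i)))) := by
          have hAx : A.mulVec x + β = Fin.append w (Fin.append u (-u)) := by
            rw [hA, hβ, vcat_mulVec, vcat_mulVec, append_add, append_add]
            have e0 : (M₁ * R).mulVec x + (M₁.mulVec r + b₁) = w := by
              rw [hw, Matrix.mulVec_add, Matrix.mulVec_mulVec, add_assoc]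
            have e1 : (-P).mulVec x + (-c) = -u := by
              rw [hu, Matrix.neg_mulVec]; abel
            rw [e0, e1, ← hu]
          have e : (fun i => Rl (A.mulVec x i + β i)) = fun i => Rl ((A.mulVec x + β) i) := rfl
          rw [e, hAx, sigma_append, sigma_append]
          rfl
        rw [hy]
        simp only [hcat_mulVec, Matrix.one_mulVec, Matrix.zero_mulVec, Matrix.neg_mulVec,
          add_zero, zero_add]
        refine congrArg₂ Fin.append (congrArg F' ?_) (congrArg G ?_)
        · funext i
          simp [hw]
        · funext i
          have h2 := Rl_sub (u i)
          simp only [Pi.add_apply, Pi.neg_apply]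
          linarith
      exact h ▸ main

lemma max_formula (a b : ℝ) : Rl (a - b) + Rl b - Rl (-b) = max a b := by
  simp only [Rl, max_def]; split_ifs <;> linarith

lemma min_formula (a b : ℝ) : Rl a - Rl (-a) - Rl (a - b) = min a b := by
  simp only [Rl, min_def, max_def]; split_ifs <;> linarith

lemma append11_zero (u v : Fin 1 → ℝ) : Fin.append u v 0 = u 0 := rfl
lemma append11_one (u v : Fin 1 → ℝ) : Fin.append u v 1 = v 0 := rfl

lemma IsMLP.pair {n : ℕ} {F G : (Fin n → ℝ) → (Fin 1 → ℝ)}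
    (hF : IsMLPCore Rl F) (hG : IsMLPCore Rl G) :
    IsMLPCore Rl (fun x => Fin.append (F x) (G x)) := by
  have pair0 := hF.par2 hG (1 : Matrix (Fin n) (Fin n) ℝ) 0 (1 : Matrix (Fin n) (Fin n) ℝ) 0
  have h : (fun x : Fin n → ℝ =>
        Fin.append (F ((1 : Matrix (Fin n) (Fin n) ℝ).mulVec x + 0))
          (G ((1 : Matrix (Fin n) (Fin n) ℝ).mulVec x + 0)))
      = fun x => Fin.append (F x) (G x) := by
    funext x
    rw [Matrix.one_mulVec, add_zero]
  exact h ▸ pair0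

lemma mlp_max {n : ℕ} {F G : (Fin n → ℝ) → ℝ} (hF : IsMLP Rl F) (hG : IsMLP Rl G) :
    IsMLP Rl (fun x => max (F x) (G x)) := by
  obtain ⟨Fc, hFc, hFv⟩ := hF
  obtain ⟨Gc, hGc, hGv⟩ := hG
  have pair := IsMLP.pair hFc hGc
  have net : IsMLPCore Rl (fun y : Fin (1 + 1) → ℝ =>
      (!![1,1,-1] : Matrix (Fin 1) (Fin 3) ℝ).mulVec
        (fun i => Rl ((!![1,-1;0,1;0,-1] : Matrix (Fin 3) (Fin (1+1)) ℝ).mulVec y i + 0)) + 0) :=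
    IsMLPCore.comp _ _ (IsMLPCore.affine _ _)
  refine ⟨_, net.compose pair, fun x => ?_⟩
  show Max.max (F x) (G x) = _
  rw [hFv, hGv]
  have e0 : Fin.append (Fc x) (Gc x) (0 : Fin (1+1)) = Fc x 0 := rfl
  have e1 : Fin.append (Fc x) (Gc x) (1 : Fin (1+1)) = Gc x 0 := rfl
  rw [← max_formula]
  simp [Matrix.mulVec, dotProduct, Fin.sum_univ_succ, e0, e1]
  ring

lemma mlp_min {n : ℕ} {F G : (Fin n → ℝ) → ℝ} (hF : IsMLP Rl F) (hG : IsMLP Rl G) :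
    IsMLP Rl (fun x => min (F x) (G x)) := by
  obtain ⟨Fc, hFc, hFv⟩ := hF
  obtain ⟨Gc, hGc, hGv⟩ := hG
  have pair := IsMLP.pair hFc hGc
  have net : IsMLPCore Rl (fun y : Fin (1 + 1) → ℝ =>
      (!![1,-1,-1] : Matrix (Fin 1) (Fin 3) ℝ).mulVec
        (fun i => Rl ((!![1,0;-1,0;1,-1] : Matrix (Fin 3) (Fin (1+1)) ℝ).mulVec y i + 0)) + 0) :=
    IsMLPCore.comp _ _ (IsMLPCore.affine _ _)
  refine ⟨_, net.compose pair, fun x => ?_⟩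
  show Min.min (F x) (G x) = _
  rw [hFv, hGv]
  have e0 : Fin.append (Fc x) (Gc x) (0 : Fin (1+1)) = Fc x 0 := rfl
  have e1 : Fin.append (Fc x) (Gc x) (1 : Fin (1+1)) = Gc x 0 := rfl
  rw [← min_formula]
  simp [Matrix.mulVec, dotProduct, Fin.sum_univ_succ, e0, e1]
  ring

lemma mlp_affine {n : ℕ} (w : Fin n → ℝ) (b₀ : ℝ) :
    IsMLP Rl (fun x => (∑ j, w j * x j) + b₀) := by
  refine ⟨fun x => (Matrix.of fun _ : Fin 1 => w).mulVec x + (fun _ => b₀),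
    IsMLPCore.affine _ _, fun x => ?_⟩
  simp [Matrix.mulVec, dotProduct]

lemma mlp_const {n : ℕ} (b₀ : ℝ) : IsMLP Rl (fun _ : Fin n → ℝ => b₀) := by
  have h := mlp_affine (n := n) 0 b₀
  simpa using h


/-- **Universal approximation for the ReLU activation.** Let
`σ = ReLU`, i.e. `σ t = max 0 t`. Then the set of ReLU-multilayer perceptrons from `ℝ^n`
to `ℝ` is dense in `C(ℝ^n, ℝ)` for the topology of uniform convergence on compact sets:
for every continuous `f : ℝ^n → ℝ`, every compact `K ⊆ ℝ^n` and every `ε > 0` there is a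
ReLU-MLP `F` with `sup_{x ∈ K} |f x - F x| < ε`. -/
theorem relu_mlp_universal_approximation
    (n : ℕ) (f : (Fin n → ℝ) → ℝ) (hf : Continuous f)
    (K : Set (Fin n → ℝ)) (hK : IsCompact K) (ε : ℝ) (hε : 0 < ε) :
    ∃ F : (Fin n → ℝ) → ℝ, IsMLP (fun t => max 0 t) F ∧ ∀ x ∈ K, |f x - F x| < ε := by
  classical
  haveI : CompactSpace K := isCompact_iff_compactSpace.mp hK
  let L : Set C(K, ℝ) := {g | ∃ F : (Fin n → ℝ) → ℝ, IsMLP Rl F ∧ ∀ x : K, g x = F x}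
  have nL : L.Nonempty :=
    ⟨⟨fun _ => 0, continuous_const⟩, (fun _ => (0 : ℝ)), mlp_const 0, fun _ => rfl⟩
  have inf_mem : ∀ f ∈ L, ∀ g ∈ L, f ⊓ g ∈ L := by
    rintro f ⟨F, hF, hFv⟩ g ⟨G, hG, hGv⟩
    exact ⟨fun x => min (F x) (G x), mlp_min hF hG, fun x => by
      simp [hFv x, hGv x, min_def]⟩
  have sup_mem : ∀ f ∈ L, ∀ g ∈ L, f ⊔ g ∈ L := by
    rintro f ⟨F, hF, hFv⟩ g ⟨G, hG, hGv⟩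
    exact ⟨fun x => max (F x) (G x), mlp_max hF hG, fun x => by
      simp [hFv x, hGv x, max_def]⟩
  have sep : L.SeparatesPointsStrongly := by
    intro v x y
    by_cases hxy : (x : Fin n → ℝ) = (y : Fin n → ℝ)
    · have hxy' : x = y := Subtype.ext hxy
      subst hxy'
      exact ⟨⟨fun _ => v x, continuous_const⟩, ⟨_, mlp_const (v x), fun _ => rfl⟩, rfl, rfl⟩
    · obtain ⟨i, hi⟩ : ∃ i, (x : Fin n → ℝ) i ≠ (y : Fin n → ℝ) i := by
        by_contra h
        push_neg at h
        exact hxy (funext h)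
      set c : ℝ := (v y - v x) / ((y : Fin n → ℝ) i - (x : Fin n → ℝ) i) with hc
      set F : (Fin n → ℝ) → ℝ :=
        fun z => (∑ j, (if j = i then c else 0) * z j) + (v x - c * (x : Fin n → ℝ) i) with hFdef
      have hFmlp : IsMLP Rl F := mlp_affine _ _
      have hsum : ∀ z : Fin n → ℝ, (∑ j, (if j = i then c else 0) * z j) = c * z i := by
        intro z
        rw [Finset.sum_eq_single i]
        · simp
        · intro j _ hj; simp [hj]
        · intro h; exact absurd (Finset.mem_univ i) h
      have hFz : ∀ z : Fin n → ℝ, F z = c * (z i - (x : Fin n → ℝ) i) + v x := by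
        intro z
        rw [hFdef]
        simp only
        rw [hsum z]
        ring
      have hcont : Continuous F := by
        rw [hFdef]
        exact (continuous_finset_sum _ fun j _ =>
          continuous_const.mul (continuous_apply j)).add continuous_const
      refine ⟨⟨fun z => F z, hcont.comp continuous_subtype_val⟩,
        ⟨F, hFmlp, fun _ => rfl⟩, ?_, ?_⟩
      · simp [hFz]
      · show F y = v y
        rw [hFz]
        have hd : (y : Fin n → ℝ) i - (x : Fin n → ℝ) i ≠ 0 :=
          sub_ne_zero_of_ne (Ne.symm hi)
        rw [hc]
        field_simp
        ring
  have hdense := ContinuousMap.sublattice_closure_eq_top L nL inf_mem sup_mem sep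
  let f' : C(K, ℝ) := ⟨fun x => f x, hf.comp continuous_subtype_val⟩
  have hmem : f' ∈ closure L := by rw [hdense]; trivial
  obtain ⟨g, hgL, hdist⟩ := Metric.mem_closure_iff.mp hmem ε hε
  obtain ⟨F, hF, hFv⟩ := hgL
  refine ⟨F, hF, fun x hx => ?_⟩
  calc |f x - F x| = dist (f' ⟨x, hx⟩) (g ⟨x, hx⟩) := by
        rw [Real.dist_eq, hFv ⟨x, hx⟩]; rfl
    _ ≤ dist f' g := ContinuousMap.dist_apply_le_dist _
    _ < ε := hdist
end
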